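/- Let ω > 0 and let χ : U* → ℝ be a function in the class Ψ₁^ω(U) (i.e., χ is continuous on U* = U \ {0}, continuously differentiable off the line v = 0, satisfies |χ(t,w)| ≤ ω whenever w < |t|/ν_t for some ν_t > 0 depending on t ≠ 0, and there exist positive constants c, K₁, K₂, ε with |χ(0,v) − c/v| < K₁/v^{1−ε} and |∂χ/∂t(t,v)| < K₂/v² for v ≠ 0). Then there exist δ, ε' > 0 and for every t ≠ 0 a constant ν_t > 0 such that for all (t,v), (t,w) in U* with v < δ and ν_t·w < |t| < ε'·v, one has χ(t,v) > |χ(t,w)|. -/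

import Mathlib

open Real Set

/-- **First-order monotony criterion (Lemma 1).**
Let `H² = {(t,v) : v ≥ 0}`, `U ⊆ H²` an open neighbourhood of the origin (in the
subspace topology of the half plane), and `U* = U \ {0}`.  Let `ω > 0` and let
`χ : ℝ × ℝ → ℝ` belong to the class `Ψ₁^ω(U)`, i.e.:
* `χ` is continuous on `U*`;
* `χ` is continuously differentiable in `t` off the line `v = 0`, with derivative `χ'`
  continuous there;
* for every `t ≠ 0` there is `ν t > 0` such that `|χ(t,w)| ≤ ω` whenever `w < |t|/ν t`;
* there are constants `c, K₁, K₂, ε > 0` with `|χ(0,v) − c/v| < K₁/v^(1−ε)` and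
  `|∂χ/∂t (t,v)| < K₂/v²` for `v ≠ 0` in `U*`.
Then there are `δ, ε' > 0` and for every `t ≠ 0` a constant `ν' t > 0` such that
for all `(t,v), (t,w) ∈ U*` with `v < δ` and `ν' t · w < |t| < ε' · v` one has
`χ(t,v) > |χ(t,w)|`. -/
theorem first_order_monotony
    (U : Set (ℝ × ℝ)) (hUsub : U ⊆ {p : ℝ × ℝ | 0 ≤ p.2})
    (hUopen : ∃ V : Set (ℝ × ℝ), IsOpen V ∧ U = V ∩ {p : ℝ × ℝ | 0 ≤ p.2})
    (hU0 : (0, 0) ∈ U)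
    (Ustar : Set (ℝ × ℝ)) (hUstar : Ustar = U \ {(0, 0)})
    (ω : ℝ) (hω : 0 < ω)
    (χ : ℝ × ℝ → ℝ) (χ' : ℝ × ℝ → ℝ)
    (hcont : ContinuousOn χ Ustar)
    (hdiff : ∀ p ∈ Ustar, p.2 ≠ 0 →
      HasDerivAt (fun s : ℝ => χ (s, p.2)) (χ' p) p.1)
    (hdiffcont : ContinuousOn χ' {p ∈ Ustar | p.2 ≠ 0})
    (ν : ℝ → ℝ) (hν : ∀ t : ℝ, t ≠ 0 → 0 < ν t)
    (hbound : ∀ t : ℝ, t ≠ 0 → ∀ w : ℝ, (t, w) ∈ Ustar → w < |t| / ν t →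
      |χ (t, w)| ≤ ω)
    (c K₁ K₂ ε : ℝ) (hc : 0 < c) (hK₁ : 0 < K₁) (hK₂ : 0 < K₂) (hε : 0 < ε)
    (hsing : ∀ v : ℝ, (0, v) ∈ Ustar → v ≠ 0 →
      |χ (0, v) - c / v| < K₁ / v ^ (1 - ε))
    (hderivbound : ∀ p ∈ Ustar, p.2 ≠ 0 → |χ' p| < K₂ / p.2 ^ 2) :
    ∃ δ > 0, ∃ ε' > 0, ∃ ν' : ℝ → ℝ, (∀ t : ℝ, t ≠ 0 → 0 < ν' t) ∧
      ∀ t v w : ℝ, t ≠ 0 → (t, v) ∈ Ustar → (t, w) ∈ Ustar →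
        v < δ → ν' t * w < |t| → |t| < ε' * v →
        |χ (t, w)| < χ (t, v) := by
  obtain ⟨V, hVopen, hUV⟩ := hUopen
  have hV0 : (0, 0) ∈ V := by rw [hUV] at hU0; exact hU0.1
  obtain ⟨r, hr, hball⟩ := Metric.isOpen_iff.1 hVopen (0, 0) hV0
  refine ⟨min (min (r / 2) (c / (2 * ω))) ((c / (4 * K₁)) ^ (1 / ε)), ?_,
    min 1 (c / (4 * K₂)), lt_min one_pos (by positivity), ν, hν, ?_⟩
  · exact lt_min (lt_min (by positivity) (by positivity))
      (Real.rpow_pos_of_pos (by positivity) _)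
  intro t v w ht hv hw hvδ hνw htε
  set δ := min (min (r / 2) (c / (2 * ω))) ((c / (4 * K₁)) ^ (1 / ε)) with hδdef
  set ε' := min 1 (c / (4 * K₂)) with hε'def
  have hε'1 : ε' ≤ 1 := min_le_left _ _
  have hε'K : ε' ≤ c / (4 * K₂) := min_le_right _ _
  have hε'pos : 0 < ε' := lt_min one_pos (by positivity)
  -- v > 0
  have hv0 : 0 < v := by
    rcases lt_or_ge 0 v with h | h
    · exact h
    · exfalso; nlinarith [abs_pos.2 ht, mul_nonpos_of_nonneg_of_nonpos hε'pos.le h]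
  have htv : |t| < v := by nlinarith [abs_nonneg t]
  have hvr : v < r := by
    have h1 : δ ≤ r / 2 := (min_le_left _ _).trans (min_le_left _ _)
    linarith
  -- membership of the segment
  have hmem : ∀ s : ℝ, |s| ≤ |t| → (s, v) ∈ Ustar := by
    intro s hs
    rw [hUstar]
    refine ⟨?_, ?_⟩
    · rw [hUV]
      refine ⟨hball ?_, hv0.le⟩
      rw [Metric.mem_ball, Prod.dist_eq]
      simp only [Real.dist_eq, sub_zero]
      exact max_lt (lt_of_le_of_lt hs (htv.trans hvr)) (by rw [abs_of_pos hv0]; exact hvr)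
    · simp only [mem_singleton_iff, Prod.mk.injEq, not_and]
      exact fun _ => hv0.ne'
  -- mean value inequality
  have habs : ∀ x ∈ segment ℝ (0:ℝ) t, |x| ≤ |t| := by
    intro x hx
    rw [segment_eq_uIcc, Set.mem_uIcc] at hx
    rcases hx with ⟨h1, h2⟩ | ⟨h1, h2⟩
    · exact abs_le.2 ⟨by linarith [abs_nonneg t], h2.trans (le_abs_self t)⟩
    · exact abs_le.2 ⟨(neg_abs_le t).trans h1, by linarith [abs_nonneg t]⟩
  have hMVT : |χ (t, v) - χ (0, v)| ≤ K₂ / v ^ 2 * |t| := by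
    have := (convex_segment (0:ℝ) t).norm_image_sub_le_of_norm_hasDerivWithin_le
      (f := fun s => χ (s, v)) (f' := fun s => χ' (s, v)) (C := K₂ / v ^ 2)
      (fun x hx => ((hdiff (x, v) (hmem x (habs x hx)) hv0.ne').hasDerivWithinAt))
      (fun x hx => le_of_lt (by simpa using hderivbound (x, v) (hmem x (habs x hx)) hv0.ne'))
      (left_mem_segment ℝ 0 t) (right_mem_segment ℝ 0 t)
    simpa [Real.norm_eq_abs] using this
  -- bound on v^ε
  have h0mem : (0, v) ∈ Ustar := hmem 0 (by simp [abs_nonneg])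
  have hvεle : v ^ ε ≤ c / (4 * K₁) := by
    have hδε : v ^ ε ≤ ((c / (4 * K₁)) ^ (1 / ε)) ^ ε := by
      apply Real.rpow_le_rpow hv0.le _ hε.le
      exact le_of_lt (lt_of_lt_of_le hvδ (min_le_right _ _))
    calc v ^ ε ≤ ((c / (4 * K₁)) ^ (1 / ε)) ^ ε := hδε
      _ = c / (4 * K₁) := by
          rw [← Real.rpow_mul (by positivity), one_div_mul_cancel hε.ne', Real.rpow_one]
  -- singular bound
  have hsing' := hsing v h0mem hv0.ne'
  have hpow : v ^ ((1:ℝ) - ε) = v / v ^ ε := by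
    rw [Real.rpow_sub hv0, Real.rpow_one]
  have hK1 : K₁ / v ^ ((1:ℝ) - ε) ≤ c / 4 / v := by
    rw [hpow, div_div_eq_mul_div]
    gcongr
    have he : K₁ * (c / (4 * K₁)) = c / 4 := by field_simp
    nlinarith [mul_le_mul_of_nonneg_left hvεle hK₁.le]
  have hχ0 : c / v - c / 4 / v < χ (0, v) := by
    have := (abs_lt.1 hsing').1
    linarith
  -- derivative contribution
  have hK2 : K₂ / v ^ 2 * |t| ≤ c / 4 / v := by
    have h1 : K₂ / v ^ 2 * |t| ≤ K₂ / v ^ 2 * (ε' * v) :=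
      mul_le_mul_of_nonneg_left htε.le (by positivity)
    have h2 : K₂ / v ^ 2 * (ε' * v) = K₂ * ε' / v := by field_simp
    have h3 : K₂ * ε' ≤ c / 4 := by
      have := (le_div_iff₀ (by positivity : (0:ℝ) < 4 * K₂)).1 hε'K
      nlinarith
    have h4 : K₂ * ε' / v ≤ c / 4 / v := by gcongr
    linarith [h2 ▸ h1]
  have hmain : c / (2 * v) < χ (t, v) := by
    have h5 : χ (0, v) - K₂ / v ^ 2 * |t| ≤ χ (t, v) := by
      have := (abs_le.1 hMVT).1; linarith
    have heq : c / v - c / 4 / v - c / 4 / v = c / (2 * v) := by field_simp; ring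
    linarith
  -- ω bound
  have hωlt : ω < c / (2 * v) := by
    have h6 : v < c / (2 * ω) := lt_of_lt_of_le hvδ ((min_le_left _ _).trans (min_le_right _ _))
    rw [lt_div_iff₀ (by positivity : (0:ℝ) < 2 * v)]
    rw [lt_div_iff₀ (by positivity : (0:ℝ) < 2 * ω)] at h6
    nlinarith
  have hwb : |χ (t, w)| ≤ ω :=
    hbound t ht w hw ((lt_div_iff₀' (hν t ht)).2 hνw)
  linarith
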